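/- Let p ≥ 3 be an odd integer and q the multiplicative order of 2 modulo p. Let S and S′ be complete prefix codes of the same cardinality n, with lexicographic enumerations u₀ < ⋯ < u_{n−1} and u′₀ < ⋯ < u′_{n−1}. Then val_p(u_i) = val_p(u′_i) for all 0 ≤ i ≤ n−1 if and only if |u_i| ≡ |u′_i| (mod q) for all 0 ≤ i ≤ n−1. (This is the characterization of the p-colorable subgroup: a tree diagram (T₊, T₋) satisfies ρ(i₊) ≡ ρ(i₋) (mod p) for all leaves i if and only if ∥i₊∥ ≡ ∥i₋∥ (mod q) for all leaves i.) -/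

import Mathlib

/-- `val_p(a₁ ⋯ aₙ) = Σ_{i=1}^n aᵢ · (2⁻¹)^i ∈ ZMod p`, the reduction of
`ρ(a₁ ⋯ aₙ)` modulo `p`, defined recursively on the binary word. -/
def valp (p : ℕ) : List Bool → ZMod p
  | [] => 0
  | a :: t => ((if a then 1 else 0) + valp p t) * (2 : ZMod p)⁻¹

/-- Pairwise prefix-freeness. -/
def PFree (L : List (List Bool)) : Prop :=
  L.Pairwise (fun u v => ¬ u <+: v ∧ ¬ v <+: u)

/-- Total length measure. -/
def msr (L : List (List Bool)) : ℕ := (L.map List.length).sum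

lemma cons_lt_cons_iff' (b : Bool) (s t : List Bool) : (b :: s) < (b :: t) ↔ s < t := by
  constructor
  · intro h; cases h with
    | cons h => exact h
    | rel h => exact absurd h (lt_irrefl _)
  · intro h; exact List.Lex.cons h

lemma not_true_lt_false (s t : List Bool) : ¬ ((true :: s) < (false :: t)) := by
  intro h; cases h with
  | rel h => exact absurd h (by decide)

lemma nil_mem_cases (L : List (List Bool)) (hpf : PFree L) (hmem : [] ∈ L) : L = [[]] := by
  cases L with
  | nil => simp at hmem
  | cons a t =>
    rw [PFree, List.pairwise_cons] at hpf
    rcases List.mem_cons.mp hmem with h | h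
    · subst h
      cases t with
      | nil => rfl
      | cons b s => exact absurd (List.nil_prefix) (hpf.1 b (by simp)).1
    · exact absurd (List.nil_prefix) (hpf.1 [] h).2

lemma split_exists : ∀ (L : List (List Bool)), L.Pairwise (· < ·) → (∀ u ∈ L, u ≠ []) →
    ∃ L0 L1 : List (List Bool), L = L0.map (false :: ·) ++ L1.map (true :: ·) := by
  intro L
  induction L with
  | nil => exact fun _ _ => ⟨[], [], rfl⟩
  | cons u L ih =>
    intro hs hne
    obtain ⟨hu, hs'⟩ := List.pairwise_cons.mp hs
    obtain ⟨A, B, hAB⟩ := ih hs' (fun v hv => hne v (by simp [hv]))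
    cases u with
    | nil => exact absurd rfl (hne [] (by simp))
    | cons b t =>
      cases b with
      | false =>
        refine ⟨t :: A, B, ?_⟩
        simp [hAB]
      | true =>
        refine ⟨[], t :: B, ?_⟩
        have hA : A = [] := by
          cases A with
          | nil => rfl
          | cons a A' =>
            have hm : (false :: a) ∈ L := by
              rw [hAB]; exact List.mem_append_left _ (by simp)
            exact absurd (hu _ hm) (not_true_lt_false _ _)
        subst hA
        simp at hAB
        simp [hAB]

lemma sorted_unmap (b : Bool) (L0 : List (List Bool))
    (h : (L0.map (b :: ·)).Pairwise (· < ·)) : L0.Pairwise (· < ·) := by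
  rw [List.pairwise_map] at h
  exact h.imp (fun hxy => (cons_lt_cons_iff' b _ _).mp hxy)

lemma pfree_unmap (b : Bool) (L0 : List (List Bool))
    (h : PFree (L0.map (b :: ·))) : PFree L0 := by
  rw [PFree, List.pairwise_map] at h
  refine h.imp (fun hxy => ?_)
  refine ⟨fun hpre => hxy.1 ?_, fun hpre => hxy.2 ?_⟩
  · exact (List.cons_prefix_cons).mpr ⟨rfl, hpre⟩
  · exact (List.cons_prefix_cons).mpr ⟨rfl, hpre⟩

lemma sum_map_len_succ (L0 : List (List Bool)) :
    (L0.map fun u => u.length + 1).sum = (L0.map List.length).sum + L0.length := by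
  induction L0 with
  | nil => simp
  | cons a t ih => simp [ih]; omega

/-- The splitting lemma for complete prefix codes avoiding `[]`. -/
lemma split (L : List (List Bool)) (hs : L.Pairwise (· < ·)) (hpf : PFree L)
    (hnil : [] ∉ L) :
    ∃ L0 L1 : List (List Bool), L = L0.map (false :: ·) ++ L1.map (true :: ·) ∧
      L0.Pairwise (· < ·) ∧ L1.Pairwise (· < ·) ∧ PFree L0 ∧ PFree L1 ∧
      msr L = (L0.length + L1.length) + (msr L0 + msr L1) := by
  obtain ⟨L0, L1, hL⟩ := split_exists L hs (fun u hu hne => hnil (hne ▸ hu))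
  refine ⟨L0, L1, hL, ?_, ?_, ?_, ?_, ?_⟩
  · exact sorted_unmap false L0 ((hL ▸ hs).sublist (List.sublist_append_left _ _))
  · exact sorted_unmap true L1 ((hL ▸ hs).sublist (List.sublist_append_right _ _))
  · exact pfree_unmap false L0 ((hL ▸ hpf).sublist (List.sublist_append_left _ _))
  · exact pfree_unmap true L1 ((hL ▸ hpf).sublist (List.sublist_append_right _ _))
  · rw [hL, msr, List.map_append, List.sum_append, List.map_map, List.map_map]
    simp only [Function.comp_def, List.length_cons]
    rw [sum_map_len_succ, sum_map_len_succ]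
    rw [msr, msr]
    omega

lemma krsum_cons {R : Type*} [CommRing R] (c : R) (b : Bool) (M : List (List Bool)) :
    ((M.map (b :: ·)).map fun u => c ^ u.length).sum
      = c * ((M.map fun u => c ^ u.length).sum) := by
  rw [List.map_map]
  have : ((fun u => c ^ u.length) ∘ (b :: ·) : List Bool → R)
      = fun u => c * c ^ u.length := by
    funext u; simp [Function.comp, pow_succ, mul_comm]
  rw [this, List.sum_map_mul_left]

lemma krsum_split {R : Type*} [CommRing R] (c : R) (L0 L1 : List (List Bool)) :
    ((L0.map (false :: ·) ++ L1.map (true :: ·)).map fun u => c ^ u.length).sum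
      = c * (((L0.map fun u => c ^ u.length).sum) + ((L1.map fun u => c ^ u.length).sum)) := by
  rw [List.map_append, List.sum_append, krsum_cons, krsum_cons, mul_add]

/-- Kraft's inequality. -/
lemma kraft_le : ∀ (n : ℕ) (L : List (List Bool)), msr L ≤ n → L.Pairwise (· < ·) → PFree L →
    (L.map fun u => ((2 : ℚ)⁻¹) ^ u.length).sum ≤ 1 := by
  intro n
  induction n with
  | zero =>
    intro L hm hs hpf
    by_cases hnil : [] ∈ L
    · rw [nil_mem_cases L hpf hnil]; simp
    · cases L with
      | nil => simp
      | cons u t =>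
        cases u with
        | nil => exact absurd (by simp) hnil
        | cons b s => simp [msr] at hm
  | succ n ih =>
    intro L hm hs hpf
    by_cases hnil : [] ∈ L
    · rw [nil_mem_cases L hpf hnil]; simp
    · cases L with
      | nil => simp
      | cons u t =>
        obtain ⟨L0, L1, hL, hs0, hs1, hpf0, hpf1, hmsr⟩ := split (u :: t) hs hpf hnil
        have hlen1 : 1 ≤ L0.length + L1.length := by
          have := congrArg List.length hL
          simp at this
          omega
        have h0 : msr L0 ≤ n := by omega
        have h1 : msr L1 ≤ n := by omega
        have k0 := ih L0 h0 hs0 hpf0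
        have k1 := ih L1 h1 hs1 hpf1
        rw [hL, krsum_split]
        nlinarith [k0, k1]

/-- The key lemma: in a complete prefix code listed lexicographically, `valp` of the `i`-th
word is the partial Kraft sum (in `ZMod p`) of the earlier words, and the full Kraft sum is 1. -/
lemma main_lemma (p : ℕ) (h2 : (2 : ZMod p) * (2 : ZMod p)⁻¹ = 1) :
    ∀ (n : ℕ) (L : List (List Bool)), msr L ≤ n → L ≠ [] → L.Pairwise (· < ·) → PFree L →
      (L.map fun u => ((2 : ℚ)⁻¹) ^ u.length).sum = 1 →
      ((L.map fun u => ((2 : ZMod p)⁻¹) ^ u.length).sum = 1 ∧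
        ∀ i < L.length, valp p (L.getD i []) =
          (((L.take i).map fun u => ((2 : ZMod p)⁻¹) ^ u.length)).sum) := by
  intro n
  induction n with
  | zero =>
    intro L hm hne hs hpf hsum
    by_cases hnil : [] ∈ L
    · rw [nil_mem_cases L hpf hnil]
      constructor
      · simp
      · intro i hi
        have hi0 : i = 0 := by simpa using hi
        subst hi0
        simp [valp]
    · cases L with
      | nil => exact absurd rfl hne
      | cons u t =>
        cases u with
        | nil => exact absurd (by simp) hnil
        | cons b s => simp [msr] at hm
  | succ n ih =>
    intro L hm hne hs hpf hsum
    by_cases hnil : [] ∈ L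
    · rw [nil_mem_cases L hpf hnil]
      constructor
      · simp
      · intro i hi
        have hi0 : i = 0 := by simpa using hi
        subst hi0
        simp [valp]
    · obtain ⟨L0, L1, hL, hs0, hs1, hpf0, hpf1, hmsr⟩ := split L hs hpf hnil
      -- rationals: each part has Kraft sum 1
      have hq : ((L0.map fun u => ((2:ℚ)⁻¹) ^ u.length).sum)
          + ((L1.map fun u => ((2:ℚ)⁻¹) ^ u.length).sum) = 2 := by
        rw [hL, krsum_split] at hsum
        nlinarith [hsum]
      have k0 := kraft_le (msr L0) L0 le_rfl hs0 hpf0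
      have k1 := kraft_le (msr L1) L1 le_rfl hs1 hpf1
      have hq0 : (L0.map fun u => ((2:ℚ)⁻¹) ^ u.length).sum = 1 := by linarith
      have hq1 : (L1.map fun u => ((2:ℚ)⁻¹) ^ u.length).sum = 1 := by linarith
      have hne0 : L0 ≠ [] := by rintro rfl; simp at hq0
      have hne1 : L1 ≠ [] := by rintro rfl; simp at hq1
      have hlpos0 : 1 ≤ L0.length := List.length_pos_iff.mpr hne0
      have hlpos1 : 1 ≤ L1.length := List.length_pos_iff.mpr hne1
      have hm0 : msr L0 ≤ n := by omega
      have hm1 : msr L1 ≤ n := by omega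
      obtain ⟨hz0, hv0⟩ := ih L0 hm0 hne0 hs0 hpf0 hq0
      obtain ⟨hz1, hv1⟩ := ih L1 hm1 hne1 hs1 hpf1 hq1
      constructor
      · rw [hL, krsum_split, hz0, hz1]
        calc (2 : ZMod p)⁻¹ * (1 + 1) = (2 : ZMod p) * (2 : ZMod p)⁻¹ := by ring
        _ = 1 := h2
      · intro i hi
        have hlenL : L.length = L0.length + L1.length := by simp [hL]
        by_cases hcase : i < L0.length
        · -- first half
          have hiA : i < (L0.map (false :: ·)).length := by simpa using hcase
          have hget : L.getD i [] = false :: (L0.getD i []) := by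
            rw [hL, List.getD_append _ _ _ _ hiA]
            rw [List.getD_eq_getElem _ _ hiA, List.getElem_map,
              List.getD_eq_getElem _ _ hcase]
          have htake : L.take i = (L0.take i).map (false :: ·) := by
            rw [hL, List.take_append]
            have : i - (L0.map (false :: ·)).length = 0 := by simp; omega
            rw [this]
            simp [List.map_take]
          rw [hget, htake, krsum_cons]
          show (0 + valp p (L0.getD i [])) * (2 : ZMod p)⁻¹ = _
          rw [zero_add, hv0 i hcase, mul_comm]
        · -- second half
          push_neg at hcase
          set j := i - L0.length with hj
          have hjlt : j < L1.length := by omega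
          have hiA : (L0.map (false :: ·)).length ≤ i := by simpa using hcase
          have hjB : j < (L1.map (true :: ·)).length := by simpa using hjlt
          have hget : L.getD i [] = true :: (L1.getD j []) := by
            rw [hL, List.getD_append_right _ _ _ _ hiA]
            have : i - (L0.map (false :: ·)).length = j := by simp [hj]
            rw [this, List.getD_eq_getElem _ _ hjB, List.getElem_map,
              List.getD_eq_getElem _ _ hjlt]
          have htake : L.take i =
              L0.map (false :: ·) ++ (L1.take j).map (true :: ·) := by
            rw [hL, List.take_append]
            have h1 : (L0.map (false :: ·)).take i = L0.map (false :: ·) :=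
              List.take_of_length_le hiA
            have h2 : i - (L0.map (false :: ·)).length = j := by simp [hj]
            rw [h1, h2, List.map_take]
          rw [hget, htake, List.map_append, List.sum_append, krsum_cons, krsum_cons, hz0]
          show (1 + valp p (L1.getD j [])) * (2 : ZMod p)⁻¹ = _
          rw [hv1 j hjlt]
          ring

lemma sum_take_eq {α M : Type*} [AddCommMonoid M] (f : α → M) (d : α) :
    ∀ (L : List α) (i : ℕ), i ≤ L.length →
      ((L.take i).map f).sum = ∑ j ∈ Finset.range i, f (L.getD j d) := by
  intro L i
  induction i with
  | zero => simp
  | succ i ih =>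
    intro h
    have hi : i < L.length := by omega
    rw [List.take_succ, List.getElem?_eq_getElem hi]
    simp only [Option.toList_some, List.map_append, List.sum_append, List.map_cons,
      List.map_nil, List.sum_cons, List.sum_nil, add_zero]
    rw [ih (by omega), Finset.sum_range_succ, List.getD_eq_getElem _ _ hi]

lemma sum_take_succ {α M : Type*} [AddCommMonoid M] (f : α → M) (d : α)
    (L : List α) (j : ℕ) (hj : j < L.length) :
    ((L.take (j+1)).map f).sum = ((L.take j).map f).sum + f (L.getD j d) := by
  rw [List.take_succ, List.getElem?_eq_getElem hj]
  simp only [Option.toList_some, List.map_append, List.sum_append, List.map_cons,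
    List.map_nil, List.sum_cons, List.sum_nil, add_zero]
  rw [List.getD_eq_getElem _ _ hj]

lemma pow_inv_two_eq_iff (p : ℕ) (hodd : Odd p) (m k : ℕ) :
    ((2 : ZMod p)⁻¹) ^ m = ((2 : ZMod p)⁻¹) ^ k ↔ m ≡ k [MOD orderOf (2 : ZMod p)] := by
  have hcop : Nat.Coprime 2 p := by
    rw [Nat.Prime.coprime_iff_not_dvd Nat.prime_two]
    rw [Nat.odd_iff] at hodd
    omega
  have hu : IsUnit ((2 : ℕ) : ZMod p) := (ZMod.isUnit_iff_coprime 2 p).mpr hcop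
  have hu2 : IsUnit (2 : ZMod p) := by simpa using hu
  set u := hu2.unit with huu
  have hval : (u : ZMod p) = 2 := hu2.unit_spec
  have hinv : (2 : ZMod p)⁻¹ = ((u⁻¹ : (ZMod p)ˣ) : ZMod p) := by
    rw [← hval, ZMod.inv_coe_unit]
  rw [hinv]
  rw [← Units.val_pow_eq_pow_val, ← Units.val_pow_eq_pow_val]
  rw [← hval, orderOf_units]
  constructor
  · intro h
    have := Units.ext h
    rwa [pow_eq_pow_iff_modEq, orderOf_inv] at this
  · intro h
    have : u⁻¹ ^ m = u⁻¹ ^ k := by rwa [pow_eq_pow_iff_modEq, orderOf_inv]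
    exact congrArg Units.val this

lemma two_mul_inv (p : ℕ) (hodd : Odd p) : (2 : ZMod p) * (2 : ZMod p)⁻¹ = 1 := by
  have hcop : Nat.Coprime 2 p := by
    rw [Nat.Prime.coprime_iff_not_dvd Nat.prime_two]
    rw [Nat.odd_iff] at hodd
    omega
  have hu : IsUnit ((2 : ℕ) : ZMod p) := (ZMod.isUnit_iff_coprime 2 p).mpr hcop
  exact ZMod.mul_inv_of_unit _ (by simpa using hu)

/-- Let `p ≥ 3` be odd and `q` the multiplicative order of `2` modulo `p`.  Let `S`, `S′`
be complete prefix codes of the same cardinality `n`, presented as the lists `L`, `L'` of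
their elements in lexicographic order (nonempty, sorted, prefix-free, `Σ 2^{−|u|} = 1`).
Then `val_p(u_i) = val_p(u′_i)` for all `i` iff `|u_i| ≡ |u′_i| (mod q)` for all `i`. -/
theorem valp_eq_iff_length_modEq (p : ℕ) (hp3 : 3 ≤ p) (hodd : Odd p)
    (L L' : List (List Bool)) (hne : L ≠ []) (hne' : L' ≠ [])
    (hsorted : L.Pairwise (· < ·)) (hsorted' : L'.Pairwise (· < ·))
    (hprefixfree : ∀ u ∈ L, ∀ v ∈ L, u ≠ v → ¬ u <+: v)
    (hprefixfree' : ∀ u ∈ L', ∀ v ∈ L', u ≠ v → ¬ u <+: v)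
    (hsum : (L.map fun u => ((2 : ℚ)⁻¹) ^ u.length).sum = 1)
    (hsum' : (L'.map fun u => ((2 : ℚ)⁻¹) ^ u.length).sum = 1)
    (hlen : L.length = L'.length) :
    (∀ i : ℕ, i < L.length → valp p (L.getD i []) = valp p (L'.getD i [])) ↔
      (∀ i : ℕ, i < L.length →
        (L.getD i []).length ≡ (L'.getD i []).length [MOD orderOf (2 : ZMod p)]) := by
  have h2 := two_mul_inv p hodd
  have hpf : PFree L := by
    refine hsorted.nodup.imp_of_mem (fun {u v} hu hv hne => ?_)
    exact ⟨hprefixfree u hu v hv hne, hprefixfree v hv u hu (Ne.symm hne)⟩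
  have hpf' : PFree L' := by
    refine hsorted'.nodup.imp_of_mem (fun {u v} hu hv hne => ?_)
    exact ⟨hprefixfree' u hu v hv hne, hprefixfree' v hv u hu (Ne.symm hne)⟩
  obtain ⟨hfull, hval⟩ := main_lemma p h2 (msr L) L le_rfl hne hsorted hpf hsum
  obtain ⟨hfull', hval'⟩ := main_lemma p h2 (msr L') L' le_rfl hne' hsorted' hpf' hsum'
  constructor
  · -- valp equal → lengths congruent
    intro hv i hi
    rw [← pow_inv_two_eq_iff p hodd]
    have key : ((L.take (i+1)).map fun u => ((2 : ZMod p)⁻¹) ^ u.length).sum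
        = ((L'.take (i+1)).map fun u => ((2 : ZMod p)⁻¹) ^ u.length).sum := by
      rcases Nat.lt_or_ge (i+1) L.length with h | h
      · rw [← hval (i+1) h, ← hval' (i+1) (by omega)]
        exact hv (i+1) h
      · have hjn : i + 1 = L.length := by omega
        have hL1 : L.take (i+1) = L := by rw [hjn]; exact List.take_length
        have hL2 : L'.take (i+1) = L' := by rw [hjn, hlen]; exact List.take_length
        rw [hL1, hL2, hfull, hfull']
    have keyl : ((L.take i).map fun u => ((2 : ZMod p)⁻¹) ^ u.length).sum
        = ((L'.take i).map fun u => ((2 : ZMod p)⁻¹) ^ u.length).sum := by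
      rw [← hval i hi, ← hval' i (by omega)]
      exact hv i hi
    have e1 := sum_take_succ (fun u => ((2 : ZMod p)⁻¹) ^ u.length) [] L i hi
    have e2 := sum_take_succ (fun u => ((2 : ZMod p)⁻¹) ^ u.length) [] L' i (by omega)
    rw [key, keyl, e2] at e1
    exact (add_left_cancel e1).symm
  · -- lengths congruent → valp equal
    intro hl i hi
    rw [hval i hi, hval' i (by omega),
      sum_take_eq (fun u => ((2 : ZMod p)⁻¹) ^ u.length) [] L i (le_of_lt hi),
      sum_take_eq (fun u => ((2 : ZMod p)⁻¹) ^ u.length) [] L' i (by omega)]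
    refine Finset.sum_congr rfl (fun j hj => ?_)
    have hjn : j < L.length := by
      have := Finset.mem_range.mp hj
      omega
    exact (pow_inv_two_eq_iff p hodd _ _).mpr (hl j hjn)
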